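/- The maps θ ↦ P̲(f,Z,φ,θ) and θ ↦ P̄(f,Z,φ,θ) are continuous on the interval (0,1] for any nonempty Z ⊆ X and φ ∈ C(X,ℝ). -/

import Mathlib

open Filter Topology Set ENNReal NNReal MeasureTheory

namespace NDSPressure

variable {X : Type*} [MetricSpace X]

/-- `traj f j = f_j ∘ ⋯ ∘ f_1` (with `traj f 0 = id`), the time-`j` map of the
nonautonomous system `f = {f_i}_{i ≥ 1}`. -/
def traj (f : ℕ → X → X) : ℕ → X → X
  | 0 => id
  | n + 1 => f (n + 1) ∘ traj f n

/-- The nonautonomous Birkhoff sum `S_n φ(x) = Σ_{j<n} φ(f_1^j x)`. -/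
noncomputable def birkhoff (f : ℕ → X → X) (φ : X → ℝ) (n : ℕ) (x : X) : ℝ :=
  ∑ j ∈ Finset.range n, φ (traj f j x)

/-- The Bowen ball `B_n(x, δ)` for the nonautonomous system `f`. -/
def bowenBall (f : ℕ → X → X) (n : ℕ) (δ : ℝ) (x : X) : Set X :=
  {y | ∀ j < n, dist (traj f j x) (traj f j y) < δ}

/-- The Bowen metric `d_n(x,y) = max_{0 ≤ j ≤ n-1} d(f_1^j x, f_1^j y)`. -/
noncomputable def dnDist (f : ℕ → X → X) (n : ℕ) (x y : X) : ℝ :=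
  (((Finset.range n).sup fun j => nndist (traj f j x) (traj f j y) : ℝ≥0) : ℝ)

/-- Admissible string/ball lengths for the parameter `θ ∈ [0,1]`:
`N ≤ n` and `n < N/θ + 1` (no upper restriction when `θ = 0`). -/
def admissible (θ : ℝ) (N n : ℕ) : Prop :=
  N ≤ n ∧ (n : ℝ) * θ < N + θ

/-- Weight `exp(-α n + sup_{B_n(x,δ)} S_n φ)` of a Bowen ball, as an extended nonnegative real. -/
noncomputable def ballWeight (f : ℕ → X → X) (φ : X → ℝ) (α δ : ℝ) (p : X × ℕ) : ℝ≥0∞ :=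
  ENNReal.ofReal (Real.exp (-α * p.2 + sSup (birkhoff f φ p.2 '' bowenBall f p.2 δ p.1)))

/-- Weight `exp(-α n + S_n φ(x))` of a Bowen ball using the value at the center. -/
noncomputable def ballWeightC (f : ℕ → X → X) (φ : X → ℝ) (α : ℝ) (p : X × ℕ) : ℝ≥0∞ :=
  ENNReal.ofReal (Real.exp (-α * p.2 + birkhoff f φ p.2 p.1))

/-- The Carathéodory–Pesin set function `M(Z, α, φ, δ, N, θ)` defined via covers of `Z`
by Bowen balls of admissible lengths. -/
noncomputable def MBall (f : ℕ → X → X) (Z : Set X) (α : ℝ) (φ : X → ℝ) (δ : ℝ)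
    (N : ℕ) (θ : ℝ) : ℝ≥0∞ :=
  ⨅ (S : Set (X × ℕ)) (_ : S.Countable) (_ : ∀ p ∈ S, admissible θ N p.2)
    (_ : Z ⊆ ⋃ p ∈ S, bowenBall f p.2 δ p.1),
      ∑' p : S, ballWeight f φ α δ (p : X × ℕ)

/-- Variant of `MBall` where Birkhoff sums are evaluated at the centers of the balls. -/
noncomputable def MBallC (f : ℕ → X → X) (Z : Set X) (α : ℝ) (φ : X → ℝ) (δ : ℝ)
    (N : ℕ) (θ : ℝ) : ℝ≥0∞ :=
  ⨅ (S : Set (X × ℕ)) (_ : S.Countable) (_ : ∀ p ∈ S, admissible θ N p.2)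
    (_ : Z ⊆ ⋃ p ∈ S, bowenBall f p.2 δ p.1),
      ∑' p : S, ballWeightC f φ α (p : X × ℕ)

noncomputable def mLowerBall (f : ℕ → X → X) (Z : Set X) (α : ℝ) (φ : X → ℝ)
    (δ θ : ℝ) : ℝ≥0∞ :=
  liminf (fun N => MBall f Z α φ δ N θ) atTop

noncomputable def mUpperBall (f : ℕ → X → X) (Z : Set X) (α : ℝ) (φ : X → ℝ)
    (δ θ : ℝ) : ℝ≥0∞ :=
  limsup (fun N => MBall f Z α φ δ N θ) atTop

/-- Lower θ-intermediate topological pressure of `φ` on `Z` at scale `δ`. -/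
noncomputable def lowerPBall (f : ℕ → X → X) (Z : Set X) (φ : X → ℝ) (δ θ : ℝ) : ℝ :=
  sInf {α : ℝ | mLowerBall f Z α φ δ θ = 0}

/-- Upper θ-intermediate topological pressure of `φ` on `Z` at scale `δ`. -/
noncomputable def upperPBall (f : ℕ → X → X) (Z : Set X) (φ : X → ℝ) (δ θ : ℝ) : ℝ :=
  sInf {α : ℝ | mUpperBall f Z α φ δ θ = 0}

/-- Center variants of the pressures at scale `δ`. -/
noncomputable def lowerPBallC (f : ℕ → X → X) (Z : Set X) (φ : X → ℝ) (δ θ : ℝ) : ℝ :=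
  sInf {α : ℝ | liminf (fun N => MBallC f Z α φ δ N θ) atTop = 0}

noncomputable def upperPBallC (f : ℕ → X → X) (Z : Set X) (φ : X → ℝ) (δ θ : ℝ) : ℝ :=
  sInf {α : ℝ | limsup (fun N => MBallC f Z α φ δ N θ) atTop = 0}

/-- The lower θ-intermediate topological pressure `P̲(f, Z, φ, θ) = lim_{δ→0} P̲(f,Z,φ,δ,θ)`
(the limit exists; we take the `limsup` along `δ → 0⁺`, which equals it). -/
noncomputable def lowerP (f : ℕ → X → X) (Z : Set X) (φ : X → ℝ) (θ : ℝ) : ℝ :=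
  limsup (fun δ => lowerPBall f Z φ δ θ) (𝓝[>] (0 : ℝ))

/-- The upper θ-intermediate topological pressure `P̄(f, Z, φ, θ)`. -/
noncomputable def upperP (f : ℕ → X → X) (Z : Set X) (φ : X → ℝ) (θ : ℝ) : ℝ :=
  limsup (fun δ => upperPBall f Z φ δ θ) (𝓝[>] (0 : ℝ))

/-! ### String (open cover) version -/

/-- For a string `L = (U_0, …, U_{m-1})` of sets, the set
`X(L) = {x : f_1^j x ∈ U_j for all j < m}`. -/
def stringSet (f : ℕ → X → X) (L : List (Set X)) : Set X :=
  {x | ∀ j < L.length, traj f j x ∈ L.getD j ∅}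

/-- Weight of a string. -/
noncomputable def strWeight (f : ℕ → X → X) (φ : X → ℝ) (α : ℝ) (L : List (Set X)) : ℝ≥0∞ :=
  ENNReal.ofReal (Real.exp (-α * L.length + sSup (birkhoff f φ L.length '' stringSet f L)))

/-- The Carathéodory–Pesin set function defined via covers of `Z` by string sets coming
from the cover `𝒰`, with admissible string lengths. -/
noncomputable def MStr (f : ℕ → X → X) (Z : Set X) (α : ℝ) (φ : X → ℝ)
    (𝒰 : Finset (Set X)) (N : ℕ) (θ : ℝ) : ℝ≥0∞ :=
  ⨅ (G : Set (List (Set X))) (_ : G.Countable)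
    (_ : ∀ L ∈ G, (∀ U ∈ L, U ∈ 𝒰) ∧ admissible θ N L.length)
    (_ : Z ⊆ ⋃ L ∈ G, stringSet f L),
      ∑' L : G, strWeight f φ α (L : List (Set X))

/-- Lower θ-intermediate pressure relative to the open cover `𝒰`. -/
noncomputable def lowerPStr (f : ℕ → X → X) (Z : Set X) (φ : X → ℝ)
    (𝒰 : Finset (Set X)) (θ : ℝ) : ℝ :=
  sInf {α : ℝ | liminf (fun N => MStr f Z α φ 𝒰 N θ) atTop = 0}

/-- Upper θ-intermediate pressure relative to the open cover `𝒰`. -/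
noncomputable def upperPStr (f : ℕ → X → X) (Z : Set X) (φ : X → ℝ)
    (𝒰 : Finset (Set X)) (θ : ℝ) : ℝ :=
  sInf {α : ℝ | limsup (fun N => MStr f Z α φ 𝒰 N θ) atTop = 0}

/-- `𝒰` is a finite open cover of `X`. -/
def IsFinOpenCover (𝒰 : Finset (Set X)) : Prop :=
  (∀ U ∈ 𝒰, IsOpen U) ∧ ⋃₀ (𝒰 : Set (Set X)) = Set.univ

/-- The mesh `|𝒰|` of a cover: the maximal diameter of its elements. -/
noncomputable def coverDiam (𝒰 : Finset (Set X)) : ℝ :=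
  sSup (Metric.diam '' (𝒰 : Set (Set X)))

/-- The filter of finite open covers of vanishing mesh (`|𝒰| → 0`). -/
noncomputable def coverFilter (X : Type*) [MetricSpace X] :
    Filter {𝒰 : Finset (Set X) // IsFinOpenCover 𝒰} :=
  Filter.comap (fun 𝒰 => coverDiam 𝒰.1) (𝓝 (0 : ℝ))

/-- The open-cover definition of the lower θ-intermediate pressure:
`lim_{|𝒰|→0} P̲(f,Z,φ,𝒰,θ)` (as a `limsup` along the cover filter). -/
noncomputable def lowerPStrFull (f : ℕ → X → X) (Z : Set X) (φ : X → ℝ) (θ : ℝ) : ℝ :=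
  limsup (fun 𝒰 : {𝒰 : Finset (Set X) // IsFinOpenCover 𝒰} => lowerPStr f Z φ 𝒰.1 θ)
    (coverFilter X)

/-- The open-cover definition of the upper θ-intermediate pressure. -/
noncomputable def upperPStrFull (f : ℕ → X → X) (Z : Set X) (φ : X → ℝ) (θ : ℝ) : ℝ :=
  limsup (fun 𝒰 : {𝒰 : Finset (Set X) // IsFinOpenCover 𝒰} => upperPStr f Z φ 𝒰.1 θ)
    (coverFilter X)

/-! ### Measure-theoretic version -/

/-- `M_μ(f, α, φ, ε, N, θ)`: infimum over finite μ-covers by Bowen balls of admissible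
lengths of the total weight. -/
noncomputable def MMeas [MeasurableSpace X] (f : ℕ → X → X) (μ : Measure X) (α : ℝ)
    (φ : X → ℝ) (ε : ℝ) (N : ℕ) (θ : ℝ) : ℝ≥0∞ :=
  ⨅ (S : Finset (X × ℕ)) (_ : ∀ p ∈ S, admissible θ N p.2)
    (_ : μ (⋃ p ∈ S, bowenBall f p.2 ε p.1) = 1),
      ∑ p ∈ S, ballWeight f φ α ε p

noncomputable def lowerPMeasEps [MeasurableSpace X] (f : ℕ → X → X) (μ : Measure X)
    (φ : X → ℝ) (ε θ : ℝ) : ℝ :=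
  sInf {α : ℝ | liminf (fun N => MMeas f μ α φ ε N θ) atTop = 0}

noncomputable def upperPMeasEps [MeasurableSpace X] (f : ℕ → X → X) (μ : Measure X)
    (φ : X → ℝ) (ε θ : ℝ) : ℝ :=
  sInf {α : ℝ | limsup (fun N => MMeas f μ α φ ε N θ) atTop = 0}

/-- The lower θ-intermediate measure-theoretic pressure `P̲_μ(f, φ, θ)`. -/
noncomputable def lowerPMeas [MeasurableSpace X] (f : ℕ → X → X) (μ : Measure X)
    (φ : X → ℝ) (θ : ℝ) : ℝ :=
  limsup (fun ε => lowerPMeasEps f μ φ ε θ) (𝓝[>] (0 : ℝ))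

/-- The upper θ-intermediate measure-theoretic pressure `P̄_μ(f, φ, θ)`. -/
noncomputable def upperPMeas [MeasurableSpace X] (f : ℕ → X → X) (μ : Measure X)
    (φ : X → ℝ) (θ : ℝ) : ℝ :=
  limsup (fun ε => upperPMeasEps f μ φ ε θ) (𝓝[>] (0 : ℝ))

/-! ### Power system -/

/-- `compFrom f k n = f_{k+n} ∘ ⋯ ∘ f_{k+1}`. -/
def compFrom (f : ℕ → X → X) (k : ℕ) : ℕ → X → X
  | 0 => id
  | n + 1 => f (k + n + 1) ∘ compFrom f k n

/-- The `m`-th power system `f^m = {f_{(i-1)m+1}^{im}}_{i ≥ 1}`. -/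
def powerSeq (f : ℕ → X → X) (m : ℕ) : ℕ → X → X :=
  fun i => compFrom f ((i - 1) * m) m

lemma generic_cont (C : ℝ) (hC : 0 ≤ C) (w : ℝ → ℝ) (T : ℝ → ℝ → Set ℝ)
    (hw0 : ∀ δ, 0 < δ → 0 ≤ w δ) (hw2C : ∀ δ, 0 < δ → w δ ≤ 2*C)
    (hwsmall : ∀ η, 0 < η → ∀ᶠ δ in 𝓝[>] (0:ℝ), w δ ≤ η)
    (hT1 : ∀ δ θ α, α ∈ T δ θ → -C ≤ α)
    (hT2 : ∀ δ θ θ', 0 < θ → θ ≤ θ' → T δ θ' ⊆ T δ θ)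
    (hT3 : ∀ δ θ θ' α α', 0 < δ → θ ∈ Ioc (0:ℝ) 1 → θ' ∈ Ioc (0:ℝ) 1 → θ ≤ θ' →
        α ∈ T δ θ → (θ'/θ)*(α+C) - C + w δ ≤ α' → α' ∈ T δ θ') :
    ContinuousOn (fun θ => limsup (fun δ => sInf (T δ θ)) (𝓝[>] (0:ℝ))) (Ioc (0:ℝ) 1) := by
  set q : ℝ → ℝ → ℝ := fun δ θ => sInf (T δ θ) with hq
  have hbdd : ∀ δ θ, BddBelow (T δ θ) := fun δ θ => ⟨-C, fun α h => hT1 δ θ α h⟩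
  have hq_lb : ∀ δ θ, -C ≤ q δ θ := by
    intro δ θ
    rcases (T δ θ).eq_empty_or_nonempty with h | h
    · simp only [hq, h, Real.sInf_empty]; linarith
    · exact le_csInf h (hT1 δ θ)
  have hq2 : ∀ δ θ θ', 0 < δ → θ ∈ Ioc (0:ℝ) 1 → θ' ∈ Ioc (0:ℝ) 1 → θ ≤ θ' →
      q δ θ ≤ q δ θ' := by
    intro δ θ θ' hδ hθ hθ' hθθ'
    rcases (T δ θ).eq_empty_or_nonempty with h | ⟨α, hα⟩
    · have h' : T δ θ' = ∅ := eq_empty_of_subset_empty (h ▸ hT2 δ θ θ' hθ.1 hθθ')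
      simp [hq, h, h']
    · have hne' : (T δ θ').Nonempty :=
        ⟨(θ'/θ)*(α+C) - C + w δ, hT3 δ θ θ' α _ hδ hθ hθ' hθθ' hα le_rfl⟩
      exact csInf_le_csInf (hbdd δ θ) hne' (hT2 δ θ θ' hθ.1 hθθ')
  have hq3 : ∀ δ θ θ', 0 < δ → θ ∈ Ioc (0:ℝ) 1 → θ' ∈ Ioc (0:ℝ) 1 → θ ≤ θ' →
      q δ θ' ≤ (θ'/θ)*(q δ θ + C) - C + w δ := by
    intro δ θ θ' hδ hθ hθ' hθθ'
    have hr1 : (1:ℝ) ≤ θ'/θ := (one_le_div hθ.1).2 hθθ'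
    rcases (T δ θ).eq_empty_or_nonempty with h | hne
    · have h' : T δ θ' = ∅ := eq_empty_of_subset_empty (h ▸ hT2 δ θ θ' hθ.1 hθθ')
      simp only [hq, h, h', Real.sInf_empty]
      nlinarith [hw0 δ hδ]
    · apply _root_.le_of_forall_pos_le_add
      intro ε hε
      have hε' : 0 < ε / (θ'/θ) := div_pos hε (by linarith)
      obtain ⟨α, hα, hαlt⟩ := Real.lt_sInf_add_pos hne hε'
      have hmem : (θ'/θ)*(α+C) - C + w δ ∈ T δ θ' :=
        hT3 δ θ θ' α _ hδ hθ hθ' hθθ' hα le_rfl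
      have h1 : q δ θ' ≤ (θ'/θ)*(α+C) - C + w δ := csInf_le (hbdd δ θ') hmem
      have h2 : (θ'/θ)*(α+C) ≤ (θ'/θ)*(q δ θ + ε/(θ'/θ) + C) :=
        mul_le_mul_of_nonneg_left (by linarith) (by linarith)
      have hpos : (0:ℝ) < θ'/θ := lt_of_lt_of_le zero_lt_one hr1
      have h3 : (θ'/θ) * (ε/(θ'/θ)) = ε := mul_div_cancel₀ _ hpos.ne'
      have h4 : (θ'/θ)*(q δ θ + ε/(θ'/θ) + C)
          = (θ'/θ)*(q δ θ + C) + (θ'/θ)*(ε/(θ'/θ)) := by ring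
      linarith
  have hco : ∀ θ, IsCoboundedUnder (· ≤ ·) (𝓝[>] (0:ℝ)) (fun δ => q δ θ) := by
    intro θ
    exact IsBoundedUnder.isCoboundedUnder_le
      ⟨-C, eventually_map.2 (Eventually.of_forall fun δ => hq_lb δ θ)⟩
  by_cases hbd : ∃ θ₀ ∈ Ioc (0:ℝ) 1, IsBoundedUnder (· ≤ ·) (𝓝[>] (0:ℝ)) (fun δ => q δ θ₀)
  · obtain ⟨θ₀, hθ₀, hb₀⟩ := hbd
    have hball : ∀ θ, θ ∈ Ioc (0:ℝ) 1 →
        IsBoundedUnder (· ≤ ·) (𝓝[>] (0:ℝ)) (fun δ => q δ θ) := by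
      intro θ hθ
      obtain ⟨b, hb⟩ := hb₀
      rw [eventually_map] at hb
      rcases le_total θ θ₀ with h | h
      · refine ⟨b, eventually_map.2 ?_⟩
        filter_upwards [eventually_mem_nhdsWithin, hb] with δ hδ h1
        exact (hq2 δ θ θ₀ hδ hθ hθ₀ h).trans h1
      · refine ⟨(θ/θ₀)*(b + C) - C + 2*C, eventually_map.2 ?_⟩
        filter_upwards [eventually_mem_nhdsWithin, hb] with δ hδ h1
        have h2 := hq3 δ θ₀ θ hδ hθ₀ hθ h
        have h3 : (θ/θ₀)*(q δ θ₀ + C) ≤ (θ/θ₀)*(b + C) :=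
          mul_le_mul_of_nonneg_left (by linarith)
            (div_nonneg hθ.1.le hθ₀.1.le)
        have h4 := hw2C δ hδ
        linarith
    set g : ℝ → ℝ := fun θ => limsup (fun δ => q δ θ) (𝓝[>] (0:ℝ)) with hgdef
    have hg2 : ∀ θ ∈ Ioc (0:ℝ) 1, ∀ θ' ∈ Ioc (0:ℝ) 1, θ ≤ θ' → g θ ≤ g θ' := by
      intro θ hθ θ' hθ' hθθ'
      refine limsup_le_limsup ?_ (hco θ) (hball θ' hθ')
      filter_upwards [eventually_mem_nhdsWithin] with δ hδ
      exact hq2 δ θ θ' hδ hθ hθ' hθθ'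
    have hg3 : ∀ θ ∈ Ioc (0:ℝ) 1, ∀ θ' ∈ Ioc (0:ℝ) 1, θ ≤ θ' →
        g θ' ≤ (θ'/θ)*(g θ + C) - C := by
      intro θ hθ θ' hθ' hθθ'
      have hr1 : (1:ℝ) ≤ θ'/θ := (one_le_div hθ.1).2 hθθ'
      apply _root_.le_of_forall_pos_le_add
      intro ε hε
      have hε2 : 0 < ε / ((θ'/θ) + 1) := div_pos hε (by linarith)
      have h1 : ∀ᶠ δ in 𝓝[>] (0:ℝ), q δ θ < g θ + ε / ((θ'/θ) + 1) :=
        eventually_lt_of_limsup_lt (lt_add_of_pos_right _ hε2) (hball θ hθ)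
      have h2 := hwsmall _ hε2
      apply limsup_le_of_le (hco θ')
      filter_upwards [h1, h2, eventually_mem_nhdsWithin] with δ ha hb hδ
      have h3 := hq3 δ θ θ' hδ hθ hθ' hθθ'
      have h4 : (θ'/θ)*(q δ θ + C) ≤ (θ'/θ)*(g θ + ε/((θ'/θ)+1) + C) :=
        mul_le_mul_of_nonneg_left (by linarith) (by linarith)
      have h5 : (θ'/θ) * (ε/((θ'/θ)+1)) + ε/((θ'/θ)+1) ≤ ε := by
        rw [← add_one_mul]
        rw [mul_div_cancel₀]
        linarith
      nlinarith [mul_le_mul_of_nonneg_left (le_refl (ε/((θ'/θ)+1))) (le_trans zero_le_one hr1)]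
    intro θ hθ
    have hcont : Tendsto (fun θ' : ℝ => (θ'/θ)*(g θ + C) - C) (𝓝 θ) (𝓝 (g θ)) := by
      have h1 : Continuous (fun θ' : ℝ => (θ'/θ)*(g θ + C) - C) :=
        ((continuous_id.div_const θ).mul continuous_const).sub continuous_const
      have h2 := h1.tendsto θ
      have h3 : (θ/θ)*(g θ + C) - C = g θ := by
        rw [div_self hθ.1.ne']; ring
      rwa [h3] at h2
    have hlo : Tendsto (fun θ' : ℝ => min (g θ) ((θ'/θ)*(g θ + C) - C))
        (𝓝[Ioc (0:ℝ) 1] θ) (𝓝 (g θ)) := by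
      have := (tendsto_const_nhds (x := g θ) (f := 𝓝 θ)).min hcont
      rw [min_self] at this
      exact this.mono_left nhdsWithin_le_nhds
    have hhi : Tendsto (fun θ' : ℝ => max (g θ) ((θ'/θ)*(g θ + C) - C))
        (𝓝[Ioc (0:ℝ) 1] θ) (𝓝 (g θ)) := by
      have := (tendsto_const_nhds (x := g θ) (f := 𝓝 θ)).max hcont
      rw [max_self] at this
      exact this.mono_left nhdsWithin_le_nhds
    refine tendsto_of_tendsto_of_tendsto_of_le_of_le' hlo hhi ?_ ?_
    · filter_upwards [eventually_mem_nhdsWithin] with θ' hθ'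
      rcases le_total θ θ' with h | h
      · exact min_le_of_left_le (hg2 θ hθ θ' hθ' h)
      · -- θ' ≤ θ : lower bound via hg3 θ' θ
        have h2 := hg3 θ' hθ' θ hθ h
        have h0' : 0 < θ' := hθ'.1
        have h0 : 0 < θ := hθ.1
        refine min_le_of_right_le ?_
        have h3 : (θ'/θ)*(g θ + C) ≤ (θ'/θ)*((θ/θ')*(g θ' + C)) :=
          mul_le_mul_of_nonneg_left (by linarith) (div_nonneg h0'.le h0.le)
        have h4 : (θ'/θ)*((θ/θ')*(g θ' + C)) = g θ' + C := by
          field_simp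
        linarith
    · filter_upwards [eventually_mem_nhdsWithin] with θ' hθ'
      rcases le_total θ θ' with h | h
      · exact le_max_of_le_right (hg3 θ hθ θ' hθ' h)
      · exact le_max_of_le_left (hg2 θ' hθ' θ hθ h)
  · push_neg at hbd
    have hzero : EqOn (fun θ => limsup (fun δ => q δ θ) (𝓝[>] (0:ℝ)))
        (fun _ => (0:ℝ)) (Ioc (0:ℝ) 1) := by
      intro θ hθ
      simp only
      have he : {a : ℝ | ∀ᶠ δ in 𝓝[>] (0:ℝ), q δ θ ≤ a} = ∅ :=
        eq_empty_iff_forall_notMem.2 fun a ha => hbd θ hθ ⟨a, eventually_map.2 ha⟩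
      rw [limsup_eq, he, Real.sInf_empty]
    exact (continuousOn_const).congr hzero

section Concrete

variable {X : Type*} [MetricSpace X] [CompactSpace X]

lemma abs_le_norm (φ : C(X, ℝ)) (x : X) : |φ x| ≤ ‖φ‖ := by
  simpa [Real.norm_eq_abs] using φ.norm_coe_le_norm x

lemma birkhoff_le_nC (f : ℕ → X → X) (φ : C(X, ℝ)) (n : ℕ) (x : X) :
    birkhoff f ⇑φ n x ≤ (n : ℝ) * ‖φ‖ := by
  calc birkhoff f ⇑φ n x ≤ ∑ _j ∈ Finset.range n, ‖φ‖ :=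
        Finset.sum_le_sum fun j _ => (abs_le.1 (abs_le_norm φ _)).2
    _ = (n : ℝ) * ‖φ‖ := by simp [mul_comm]

lemma neg_nC_le_birkhoff (f : ℕ → X → X) (φ : C(X, ℝ)) (n : ℕ) (x : X) :
    -((n : ℝ) * ‖φ‖) ≤ birkhoff f ⇑φ n x := by
  calc -((n : ℝ) * ‖φ‖) = ∑ _j ∈ Finset.range n, -‖φ‖ := by simp [mul_comm]
    _ ≤ birkhoff f ⇑φ n x :=
        Finset.sum_le_sum fun j _ => (abs_le.1 (abs_le_norm φ _)).1

lemma birkhoff_trunc (f : ℕ → X → X) (φ : C(X, ℝ)) {m n : ℕ} (h : m ≤ n) (x : X) :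
    birkhoff f ⇑φ m x ≤ birkhoff f ⇑φ n x + ((n : ℝ) - m) * ‖φ‖ := by
  have hsplit := Finset.sum_range_add_sum_Ico (fun j => φ (traj f j x)) h
  have hIco : -((((n : ℝ)) - m) * ‖φ‖) ≤ ∑ j ∈ Finset.Ico m n, φ (traj f j x) := by
    have h1 : (Finset.Ico m n).card • (-‖φ‖) ≤ ∑ j ∈ Finset.Ico m n, φ (traj f j x) :=
      Finset.card_nsmul_le_sum _ _ _ fun j _ => (abs_le.1 (abs_le_norm φ _)).1
    have h2 : (Finset.Ico m n).card • (-‖φ‖) = -((((n : ℝ)) - m) * ‖φ‖) := by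
      simp [Nat.card_Ico, nsmul_eq_mul, Nat.cast_sub h]
    linarith [h2 ▸ h1]
  simp only [birkhoff] at *
  linarith

lemma birkhoff_close (f : ℕ → X → X) (φ : C(X, ℝ)) {δ η : ℝ} {m : ℕ} {x y : X}
    (hmod : ∀ x y : X, dist x y ≤ δ → |φ x - φ y| ≤ η)
    (hxy : ∀ j < m, dist (traj f j x) (traj f j y) < δ) :
    birkhoff f ⇑φ m y ≤ birkhoff f ⇑φ m x + (m : ℝ) * η := by
  have h2 : ∑ j ∈ Finset.range m, (φ (traj f j y) - φ (traj f j x))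
      ≤ ∑ _j ∈ Finset.range m, η :=
    Finset.sum_le_sum fun j hj => (abs_le.1 (by
      rw [abs_sub_comm]
      exact hmod _ _ (le_of_lt (hxy j (Finset.mem_range.1 hj))))).2
  rw [Finset.sum_sub_distrib] at h2
  simp only [Finset.sum_const, Finset.card_range, nsmul_eq_mul, mul_one] at h2
  simp only [birkhoff]
  linarith

lemma bddAbove_birkhoff_image (f : ℕ → X → X) (φ : C(X, ℝ)) (n : ℕ) (B : Set X) :
    BddAbove (birkhoff f ⇑φ n '' B) :=
  ⟨(n : ℝ) * ‖φ‖, by rintro v ⟨y, -, rfl⟩; exact birkhoff_le_nC f φ n y⟩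

lemma neg_le_sSup_birkhoff (f : ℕ → X → X) (φ : C(X, ℝ)) (n : ℕ) (B : Set X) :
    -((n : ℝ) * ‖φ‖) ≤ sSup (birkhoff f ⇑φ n '' B) := by
  rcases B.eq_empty_or_nonempty with h | ⟨y, hy⟩
  · rw [h]
    simp only [image_empty, Real.sSup_empty]
    have : (0:ℝ) ≤ (n : ℝ) * ‖φ‖ := by positivity
    linarith
  · exact (neg_nC_le_birkhoff f φ n y).trans
      (le_csSup (bddAbove_birkhoff_image f φ n B) (mem_image_of_mem _ hy))

lemma bowenBall_mono_len (f : ℕ → X → X) {m n : ℕ} (h : m ≤ n) (δ : ℝ) (x : X) :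
    bowenBall f n δ x ⊆ bowenBall f m δ x :=
  fun _y hy j hj => hy j (lt_of_lt_of_le hj h)

lemma self_mem_bowenBall (f : ℕ → X → X) {δ : ℝ} (hδ : 0 < δ) (n : ℕ) (x : X) :
    x ∈ bowenBall f n δ x := fun j _ => by simp [dist_self, hδ]

lemma MBall_le_of_cover (f : ℕ → X → X) (Z : Set X) (α : ℝ) (φ : X → ℝ) (δ : ℝ)
    (N : ℕ) (θ : ℝ) {S : Set (X × ℕ)} (hc : S.Countable)
    (hadm : ∀ p ∈ S, admissible θ N p.2)
    (hcov : Z ⊆ ⋃ p ∈ S, bowenBall f p.2 δ p.1) :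
    MBall f Z α φ δ N θ ≤ ∑' p : S, ballWeight f φ α δ (p : X × ℕ) :=
  iInf_le_of_le S (iInf_le_of_le hc (iInf_le_of_le hadm (iInf_le _ hcov)))

lemma exists_cover_of_lt {f : ℕ → X → X} {Z : Set X} {α : ℝ} {φ : X → ℝ} {δ : ℝ}
    {N : ℕ} {θ : ℝ} {t : ℝ≥0∞} (h : MBall f Z α φ δ N θ < t) :
    ∃ S : Set (X × ℕ), S.Countable ∧ (∀ p ∈ S, admissible θ N p.2) ∧
      (Z ⊆ ⋃ p ∈ S, bowenBall f p.2 δ p.1) ∧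
      ∑' p : S, ballWeight f φ α δ (p : X × ℕ) < t := by
  simp only [MBall, iInf_lt_iff] at h
  obtain ⟨S, hc, hadm, hcov, hlt⟩ := h
  exact ⟨S, hc, hadm, hcov, hlt⟩

lemma admissible_mono {θ θ' : ℝ} {N n : ℕ} (hθ : 0 < θ) (hθθ' : θ ≤ θ')
    (h : admissible θ' N n) : admissible θ N n := by
  refine ⟨h.1, ?_⟩
  rcases Nat.eq_zero_or_pos n with hn | hn
  · subst hn; simp; positivity
  · have hn1 : (1:ℝ) ≤ (n:ℝ) := by exact_mod_cast hn
    have h2 := h.2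
    have h3 : ((n:ℝ) - 1) * θ ≤ ((n:ℝ) - 1) * θ' :=
      mul_le_mul_of_nonneg_left hθθ' (by linarith)
    nlinarith

lemma MBall_mono_theta (f : ℕ → X → X) (Z : Set X) (α : ℝ) (φ : X → ℝ) (δ : ℝ)
    (N : ℕ) {θ θ' : ℝ} (hθ : 0 < θ) (hθθ' : θ ≤ θ') :
    MBall f Z α φ δ N θ ≤ MBall f Z α φ δ N θ' := by
  refine le_iInf fun S => le_iInf fun hc => le_iInf fun hadm => le_iInf fun hcov => ?_
  exact MBall_le_of_cover f Z α φ δ N θ hc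
    (fun p hp => admissible_mono hθ hθθ' (hadm p hp)) hcov

lemma MBall_lower_bound (f : ℕ → X → X) {Z : Set X} (hZ : Z.Nonempty) {α : ℝ}
    (φ : C(X, ℝ)) (δ : ℝ) (N : ℕ) (θ : ℝ) (hα : α < -‖φ‖) :
    ENNReal.ofReal (Real.exp ((-α - ‖φ‖) * N)) ≤ MBall f Z α ⇑φ δ N θ := by
  refine le_iInf fun S => le_iInf fun hc => le_iInf fun hadm => le_iInf fun hcov => ?_
  obtain ⟨x, hx⟩ := hZ
  obtain ⟨p, hpS, -⟩ := mem_iUnion₂.1 (hcov hx)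
  have hterm : ENNReal.ofReal (Real.exp ((-α - ‖φ‖) * N)) ≤ ballWeight f ⇑φ α δ p := by
    unfold ballWeight
    apply ENNReal.ofReal_le_ofReal
    apply Real.exp_le_exp.2
    have h1 := neg_le_sSup_birkhoff f φ p.2 (bowenBall f p.2 δ p.1)
    have h2 : (N:ℝ) ≤ (p.2 : ℝ) := by exact_mod_cast (hadm p hpS).1
    have h3 : (0:ℝ) < -α - ‖φ‖ := by linarith
    nlinarith
  exact hterm.trans (ENNReal.le_tsum (⟨p, hpS⟩ : S))

lemma ballWeight_trunc_le (f : ℕ → X → X) (φ : C(X, ℝ)) {δ η : ℝ} {m n : ℕ}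
    (hδ : 0 < δ) (hmn : m ≤ n) (hη : 0 ≤ η)
    (hmod : ∀ x y : X, dist x y ≤ δ → |φ x - φ y| ≤ η) (α α' : ℝ) (x : X) :
    ballWeight f ⇑φ α' δ (x, m) ≤
      ENNReal.ofReal (Real.exp (α * n - α' * m + ((n:ℝ) - m) * ‖φ‖ + m * η)) *
        ballWeight f ⇑φ α δ (x, n) := by
  unfold ballWeight
  rw [← ENNReal.ofReal_mul (Real.exp_nonneg _), ← Real.exp_add]
  apply ENNReal.ofReal_le_ofReal
  apply Real.exp_le_exp.2
  have hkey : sSup (birkhoff f ⇑φ m '' bowenBall f m δ x)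
      ≤ sSup (birkhoff f ⇑φ n '' bowenBall f n δ x) + ((n:ℝ) - m) * ‖φ‖ + m * η := by
    rcases (bowenBall f m δ x).eq_empty_or_nonempty with h | hne
    · have hBn : bowenBall f n δ x = ∅ :=
        eq_empty_of_subset_empty (h ▸ bowenBall_mono_len f hmn δ x)
      rw [h, hBn]
      simp only [image_empty, Real.sSup_empty, zero_add]
      have hnm : (0:ℝ) ≤ ((n:ℝ) - m) * ‖φ‖ := by
        have : (m:ℝ) ≤ n := by exact_mod_cast hmn
        have := norm_nonneg φ
        nlinarith
      have : (0:ℝ) ≤ (m:ℝ) * η := by positivity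
      linarith
    · apply csSup_le (hne.image _)
      rintro v ⟨y, hy, rfl⟩
      have h1 : birkhoff f ⇑φ m y ≤ birkhoff f ⇑φ m x + (m:ℝ) * η :=
        birkhoff_close f φ hmod hy
      have h2 : birkhoff f ⇑φ m x ≤ birkhoff f ⇑φ n x + ((n:ℝ) - m) * ‖φ‖ :=
        birkhoff_trunc f φ hmn x
      have h3 : birkhoff f ⇑φ n x ≤ sSup (birkhoff f ⇑φ n '' bowenBall f n δ x) :=
        le_csSup (bddAbove_birkhoff_image f φ n _)
          (mem_image_of_mem _ (self_mem_bowenBall f hδ n x))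
      linarith
  simp only
  linarith

lemma exponent_le {θ θ' α α' Cn η : ℝ} {N n : ℕ} (hθ : 0 < θ) (hθ'1 : θ' ≤ 1)
    (hθθ' : θ ≤ θ') (hCn : 0 ≤ Cn) (hα : -Cn ≤ α) (hη : 0 ≤ η)
    (hα' : θ'/θ * (α + Cn) - Cn + η ≤ α') (hn : N ≤ n) (hnθ : (n:ℝ) * θ < N + θ) :
    α * n - α' * (min n ⌈(N:ℝ)/θ'⌉₊) + ((n:ℝ) - (min n ⌈(N:ℝ)/θ'⌉₊)) * Cn
      + (min n ⌈(N:ℝ)/θ'⌉₊) * η ≤ α + Cn := by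
  set M : ℕ := ⌈(N:ℝ)/θ'⌉₊ with hMdef
  have hθ'0 : 0 < θ' := lt_of_lt_of_le hθ hθθ'
  have hr1 : (1:ℝ) ≤ θ'/θ := (one_le_div hθ).2 hθθ'
  have hαη : α + η ≤ α' := by nlinarith
  rcases le_or_gt n M with h | h
  · rw [min_eq_left h]
    have hn0 : (0:ℝ) ≤ (n:ℝ) := Nat.cast_nonneg n
    nlinarith
  · rw [min_eq_right h.le]
    have hM1 : (N:ℝ)/θ' ≤ (M:ℝ) := Nat.le_ceil _
    have hn' : (n:ℝ) ≤ (N:ℝ)/θ + 1 := by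
      rw [div_add' _ _ _ hθ.ne', le_div_iff₀ hθ]
      linarith
    have hc2 : 0 ≤ α' + Cn - η := by nlinarith
    have e1 : (α+Cn)*(n:ℝ) ≤ (α+Cn)*((N:ℝ)/θ+1) :=
      mul_le_mul_of_nonneg_left hn' (by linarith)
    have e2 : (θ'/θ*(α+Cn))*((N:ℝ)/θ') ≤ (α'+Cn-η)*(M:ℝ) :=
      mul_le_mul (by linarith) hM1 (div_nonneg (Nat.cast_nonneg N) hθ'0.le) hc2
    have e3 : θ'/θ*(α+Cn)*((N:ℝ)/θ') = (α+Cn)*((N:ℝ)/θ) := by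
      field_simp
    nlinarith [e1, e2, e3]

end Concrete
section Transfer

variable {X : Type*} [MetricSpace X] [CompactSpace X]

lemma liminf_const_mul_ne_top {α : Type*} {f : Filter α} [f.NeBot] {u : α → ℝ≥0∞}
    {a : ℝ≥0∞} (ha_top : a ≠ ⊤) : (f.liminf fun x => a * u x) = a * f.liminf u := by
  by_cases ha_zero : a = 0
  · simp [ha_zero, liminf_const]
  let g := fun x : ℝ≥0∞ => a * x
  have hg_bij : Function.Bijective g :=
    Function.bijective_iff_has_inverse.mpr
      ⟨fun x => a⁻¹ * x,
        ⟨fun x => by simp [g, ← mul_assoc, ENNReal.inv_mul_cancel ha_zero ha_top], fun x => by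
          simp [g, ← mul_assoc, ENNReal.mul_inv_cancel ha_zero ha_top]⟩⟩
  have hg_mono : StrictMono g :=
    Monotone.strictMono_of_injective (fun _ _ _ => by rwa [ENNReal.mul_le_mul_iff_right ha_zero ha_top])
      hg_bij.1
  let g_iso := StrictMono.orderIsoOfSurjective g hg_mono hg_bij.2
  exact (OrderIso.liminf_apply g_iso).symm

lemma MBall_transfer (f : ℕ → X → X) (Z : Set X) (φ : C(X, ℝ)) {δ θ θ' α α' η : ℝ}
    (N : ℕ) (hδ : 0 < δ) (hθ : θ ∈ Ioc (0:ℝ) 1) (hθ' : θ' ∈ Ioc (0:ℝ) 1)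
    (hθθ' : θ ≤ θ') (hα : -‖φ‖ ≤ α) (hη : 0 ≤ η)
    (hmod : ∀ x y : X, dist x y ≤ δ → |φ x - φ y| ≤ η)
    (hα' : θ'/θ * (α + ‖φ‖) - ‖φ‖ + η ≤ α') :
    MBall f Z α' ⇑φ δ N θ' ≤
      ENNReal.ofReal (Real.exp (α + ‖φ‖)) * MBall f Z α ⇑φ δ N θ := by
  set K : ℝ≥0∞ := ENNReal.ofReal (Real.exp (α + ‖φ‖)) with hK
  have hK0 : K ≠ 0 := by
    simp [hK, ENNReal.ofReal_eq_zero, not_le, Real.exp_pos]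
  have hKt : K ≠ ⊤ := ENNReal.ofReal_ne_top
  by_cases htop : MBall f Z α ⇑φ δ N θ = ⊤
  · rw [htop, ENNReal.mul_top hK0]; exact le_top
  apply ENNReal.le_of_forall_pos_le_add
  intro ε hε _
  have hε0 : ((ε : ℝ≥0∞) : ℝ≥0∞) ≠ 0 := by exact_mod_cast (ne_of_gt hε)
  have hεK : (ε : ℝ≥0∞) / K ≠ 0 := by
    simp [ENNReal.div_eq_top, ENNReal.div_eq_zero_iff, hε0, hKt]
  have hlt : MBall f Z α ⇑φ δ N θ < MBall f Z α ⇑φ δ N θ + (ε : ℝ≥0∞) / K :=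
    ENNReal.lt_add_right htop hεK
  obtain ⟨S, hSc, hSadm, hScov, hSsum⟩ := exists_cover_of_lt hlt
  set M : ℕ := ⌈(N:ℝ)/θ'⌉₊ with hMdef
  set t : X × ℕ → X × ℕ := fun p => (p.1, min p.2 M) with htdef
  have hθ'0 : 0 < θ' := hθ'.1
  have hNM : N ≤ M := by
    have h1 : (N:ℝ) ≤ (N:ℝ)/θ' := by
      rw [le_div_iff₀ hθ'0]
      nlinarith [Nat.cast_nonneg (α := ℝ) N, hθ'.2]
    exact_mod_cast h1.trans (Nat.le_ceil _)
  have hMθ' : (M:ℝ) * θ' < N + θ' := by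
    have h1 : (M:ℝ) < (N:ℝ)/θ' + 1 :=
      Nat.ceil_lt_add_one (div_nonneg (Nat.cast_nonneg N) hθ'0.le)
    have h2 : ((N:ℝ)/θ' + 1) * θ' = N + θ' := by field_simp
    nlinarith
  -- the truncated cover
  have hadm' : ∀ q ∈ t '' S, admissible θ' N q.2 := by
    rintro q ⟨p, hp, rfl⟩
    refine ⟨le_min (hSadm p hp).1 hNM, ?_⟩
    have h1 : ((min p.2 M : ℕ) : ℝ) ≤ (M : ℝ) := by
      exact_mod_cast min_le_right p.2 M
    nlinarith
  have hcov' : Z ⊆ ⋃ q ∈ t '' S, bowenBall f q.2 δ q.1 := by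
    refine hScov.trans (iUnion₂_subset fun p hp => ?_)
    refine subset_trans (bowenBall_mono_len f (min_le_left p.2 M) δ p.1) ?_
    exact subset_iUnion₂ (s := fun (q : X × ℕ) (_ : q ∈ t '' S) => bowenBall f q.2 δ q.1)
      (t p) (mem_image_of_mem t hp)
  have h1 : MBall f Z α' ⇑φ δ N θ' ≤ ∑' q : (t '' S), ballWeight f ⇑φ α' δ q :=
    MBall_le_of_cover f Z α' ⇑φ δ N θ' (hSc.image t) hadm' hcov'
  -- pointwise estimate
  have hpoint : ∀ p ∈ S, ballWeight f ⇑φ α' δ (t p) ≤ K * ballWeight f ⇑φ α δ p := by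
    intro p hp
    have h2 : ballWeight f ⇑φ α' δ (p.1, min p.2 M) ≤
        ENNReal.ofReal (Real.exp (α * p.2 - α' * (min p.2 M) +
          ((p.2:ℝ) - (min p.2 M)) * ‖φ‖ + (min p.2 M) * η)) *
          ballWeight f ⇑φ α δ (p.1, p.2) :=
      ballWeight_trunc_le f φ hδ (min_le_left _ _) hη hmod α α' p.1
    have h3 : α * p.2 - α' * (min p.2 M) + ((p.2:ℝ) - (min p.2 M)) * ‖φ‖
        + (min p.2 M) * η ≤ α + ‖φ‖ := by
      exact exponent_le hθ.1 hθ'.2 hθθ' (norm_nonneg φ) hα hη hα'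
        (hSadm p hp).1 (hSadm p hp).2
    calc ballWeight f ⇑φ α' δ (t p) ≤ _ := h2
      _ ≤ K * ballWeight f ⇑φ α δ p := by
        apply _root_.mul_le_mul_left
        exact ENNReal.ofReal_le_ofReal (Real.exp_le_exp.2 h3)
  -- sum over image ≤ K * sum
  have h4 : ∑' q : (t '' S), ballWeight f ⇑φ α' δ q ≤
      K * ∑' p : S, ballWeight f ⇑φ α δ p := by
    have hchoose : ∀ q : (t '' S), ∃ p, p ∈ S ∧ t p = (q : X × ℕ) := fun q => q.2
    choose pre hpre1 hpre2 using hchoose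
    have hinj : Function.Injective (fun q : (t '' S) => (⟨pre q, hpre1 q⟩ : S)) := by
      intro q1 q2 hq
      have : pre q1 = pre q2 := congrArg Subtype.val hq
      apply Subtype.ext
      rw [← hpre2 q1, ← hpre2 q2, this]
    calc ∑' q : (t '' S), ballWeight f ⇑φ α' δ q
        = ∑' q : (t '' S), ballWeight f ⇑φ α' δ (t (pre q)) := by
          exact tsum_congr fun q => by rw [hpre2 q]
      _ ≤ ∑' p : S, K * ballWeight f ⇑φ α δ p := by
          apply ENNReal.summable.tsum_le_tsum_of_inj _ hinj (fun _ _ => zero_le)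
            (fun q => hpoint (pre q) (hpre1 q)) ENNReal.summable
      _ = K * ∑' p : S, ballWeight f ⇑φ α δ p := ENNReal.tsum_mul_left
  calc MBall f Z α' ⇑φ δ N θ' ≤ ∑' q : (t '' S), ballWeight f ⇑φ α' δ q := h1
    _ ≤ K * ∑' p : S, ballWeight f ⇑φ α δ p := h4
    _ ≤ K * (MBall f Z α ⇑φ δ N θ + (ε : ℝ≥0∞) / K) :=
        _root_.mul_le_mul_right hSsum.le K
    _ = K * MBall f Z α ⇑φ δ N θ + (ε : ℝ≥0∞) := by
        rw [mul_add, ENNReal.mul_div_cancel hK0 hKt]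

end Transfer
/-- the maps `θ ↦ P̲(f,Z,φ,θ)` and `θ ↦ P̄(f,Z,φ,θ)` are continuous on `(0,1]`. -/
theorem pressure_continuousOn_Ioc {X : Type*} [MetricSpace X] [CompactSpace X]
    (f : ℕ → X → X) (hf : ∀ i, Continuous (f i))
    (Z : Set X) (hZ : Z.Nonempty) (φ : C(X, ℝ)) :
    ContinuousOn (fun θ => lowerP f Z (⇑φ) θ) (Set.Ioc (0 : ℝ) 1) ∧
    ContinuousOn (fun θ => upperP f Z (⇑φ) θ) (Set.Ioc (0 : ℝ) 1) := by
  have hX : Nonempty X := ⟨hZ.some⟩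
  obtain ⟨x₀⟩ := hX
  set w : ℝ → ℝ :=
    fun δ => sSup ((fun q : X × X => |φ q.1 - φ q.2|) '' {q | dist q.1 q.2 ≤ δ}) with hwdef
  have hbddw : ∀ δ : ℝ, BddAbove ((fun q : X × X => |φ q.1 - φ q.2|) '' {q | dist q.1 q.2 ≤ δ}) := by
    intro δ
    refine ⟨2 * ‖φ‖, ?_⟩
    rintro r ⟨q, -, rfl⟩
    have h1 := abs_le_norm φ q.1
    have h2 := abs_le_norm φ q.2
    calc |φ q.1 - φ q.2| ≤ |φ q.1| + |φ q.2| := abs_sub _ _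
      _ ≤ 2 * ‖φ‖ := by linarith
  have hnew : ∀ δ : ℝ, 0 ≤ δ →
      ((fun q : X × X => |φ q.1 - φ q.2|) '' {q | dist q.1 q.2 ≤ δ}).Nonempty := by
    intro δ hδ
    exact ⟨|φ x₀ - φ x₀|, ⟨(x₀, x₀), by simpa using hδ, rfl⟩⟩
  have hwmem : ∀ δ : ℝ, 0 ≤ δ → ∀ x y : X, dist x y ≤ δ → |φ x - φ y| ≤ w δ := by
    intro δ hδ x y hxy
    exact le_csSup (hbddw δ) ⟨(x, y), hxy, rfl⟩
  have hw0 : ∀ δ : ℝ, 0 < δ → 0 ≤ w δ := by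
    intro δ hδ
    have := hwmem δ hδ.le x₀ x₀ (by simpa using hδ.le)
    simpa using this
  have hw2C : ∀ δ : ℝ, 0 < δ → w δ ≤ 2 * ‖φ‖ := by
    intro δ hδ
    apply csSup_le (hnew δ hδ.le)
    rintro r ⟨q, -, rfl⟩
    have h1 := abs_le_norm φ q.1
    have h2 := abs_le_norm φ q.2
    calc |φ q.1 - φ q.2| ≤ |φ q.1| + |φ q.2| := abs_sub _ _
      _ ≤ 2 * ‖φ‖ := by linarith
  have hwsmall : ∀ η : ℝ, 0 < η → ∀ᶠ δ in 𝓝[>] (0:ℝ), w δ ≤ η := by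
    intro η hη
    obtain ⟨ε, hε, hcont⟩ := Metric.uniformContinuous_iff.1
      (CompactSpace.uniformContinuous_of_continuous φ.continuous) η hη
    filter_upwards [Ioo_mem_nhdsGT_of_mem (by constructor <;> [exact le_refl 0; exact hε])]
      with δ hδ
    apply csSup_le (hnew δ hδ.1.le)
    rintro r ⟨q, hq, rfl⟩
    have h1 : dist q.1 q.2 < ε := lt_of_le_of_lt hq hδ.2
    have h2 := hcont h1
    rw [Real.dist_eq] at h2
    exact h2.le
  constructor
  · -- lower pressure
    have hT1 : ∀ δ θ α : ℝ, α ∈ {α : ℝ | mLowerBall f Z α (⇑φ) δ θ = 0} → -‖φ‖ ≤ α := by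
      intro δ θ α hmem
      by_contra hcon
      push_neg at hcon
      have h1 : ∀ N : ℕ, ENNReal.ofReal (Real.exp ((-α - ‖φ‖) * N)) ≤ MBall f Z α (⇑φ) δ N θ :=
        fun N => MBall_lower_bound f hZ φ δ N θ hcon
      have h2 : Tendsto (fun N : ℕ => ENNReal.ofReal (Real.exp ((-α - ‖φ‖) * N)))
          atTop (𝓝 ⊤) :=
        ENNReal.tendsto_ofReal_atTop.comp (Real.tendsto_exp_atTop.comp
          (Filter.Tendsto.const_mul_atTop (by linarith) tendsto_natCast_atTop_atTop))
      have h3 : (⊤ : ℝ≥0∞) ≤ liminf (fun N => MBall f Z α (⇑φ) δ N θ) atTop := by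
        rw [← h2.liminf_eq]
        exact liminf_le_liminf (Eventually.of_forall h1)
      have h4 : mLowerBall f Z α (⇑φ) δ θ = ⊤ := top_unique h3
      rw [hmem] at h4
      exact ENNReal.top_ne_zero h4.symm
    have hT2 : ∀ δ θ θ' : ℝ, 0 < θ → θ ≤ θ' →
        {α : ℝ | mLowerBall f Z α (⇑φ) δ θ' = 0} ⊆ {α : ℝ | mLowerBall f Z α (⇑φ) δ θ = 0} := by
      intro δ θ θ' h0 hθθ' α hα
      have h1 : mLowerBall f Z α (⇑φ) δ θ ≤ mLowerBall f Z α (⇑φ) δ θ' :=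
        liminf_le_liminf (Eventually.of_forall fun N => MBall_mono_theta f Z α (⇑φ) δ N h0 hθθ')
      rw [Set.mem_setOf_eq] at hα ⊢
      rw [hα] at h1
      exact le_zero_iff.1 h1
    have hT3 : ∀ δ θ θ' α α' : ℝ, 0 < δ → θ ∈ Ioc (0:ℝ) 1 → θ' ∈ Ioc (0:ℝ) 1 → θ ≤ θ' →
        α ∈ {α : ℝ | mLowerBall f Z α (⇑φ) δ θ = 0} →
        (θ'/θ)*(α+‖φ‖) - ‖φ‖ + w δ ≤ α' →
        α' ∈ {α : ℝ | mLowerBall f Z α (⇑φ) δ θ' = 0} := by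
      intro δ θ θ' α α' hδ hθ hθ' hθθ' hmem hα'
      have hα : -‖φ‖ ≤ α := hT1 δ θ α hmem
      have hK : ∀ N, MBall f Z α' (⇑φ) δ N θ' ≤
          ENNReal.ofReal (Real.exp (α + ‖φ‖)) * MBall f Z α (⇑φ) δ N θ :=
        fun N => MBall_transfer f Z φ N hδ hθ hθ' hθθ' hα (hw0 δ hδ) (hwmem δ hδ.le) hα'
      have h1 : liminf (fun N => MBall f Z α' (⇑φ) δ N θ') atTop ≤
          liminf (fun N => ENNReal.ofReal (Real.exp (α + ‖φ‖)) * MBall f Z α (⇑φ) δ N θ) atTop :=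
        liminf_le_liminf (Eventually.of_forall hK)
      rw [liminf_const_mul_ne_top ENNReal.ofReal_ne_top] at h1
      rw [Set.mem_setOf_eq] at hmem ⊢
      rw [show liminf (fun N => MBall f Z α (⇑φ) δ N θ) atTop = mLowerBall f Z α (⇑φ) δ θ
        from rfl, hmem, mul_zero] at h1
      exact le_zero_iff.1 h1
    have := generic_cont ‖φ‖ (norm_nonneg φ) w
      (fun δ θ => {α : ℝ | mLowerBall f Z α (⇑φ) δ θ = 0}) hw0 hw2C hwsmall hT1 hT2 hT3
    exact this
  · -- upper pressure
    have hT1 : ∀ δ θ α : ℝ, α ∈ {α : ℝ | mUpperBall f Z α (⇑φ) δ θ = 0} → -‖φ‖ ≤ α := by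
      intro δ θ α hmem
      by_contra hcon
      push_neg at hcon
      have h1 : ∀ N : ℕ, ENNReal.ofReal (Real.exp ((-α - ‖φ‖) * N)) ≤ MBall f Z α (⇑φ) δ N θ :=
        fun N => MBall_lower_bound f hZ φ δ N θ hcon
      have h2 : Tendsto (fun N : ℕ => ENNReal.ofReal (Real.exp ((-α - ‖φ‖) * N)))
          atTop (𝓝 ⊤) :=
        ENNReal.tendsto_ofReal_atTop.comp (Real.tendsto_exp_atTop.comp
          (Filter.Tendsto.const_mul_atTop (by linarith) tendsto_natCast_atTop_atTop))
      have h3 : (⊤ : ℝ≥0∞) ≤ limsup (fun N => MBall f Z α (⇑φ) δ N θ) atTop := by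
        rw [← h2.limsup_eq]
        exact limsup_le_limsup (Eventually.of_forall h1)
      have h4 : mUpperBall f Z α (⇑φ) δ θ = ⊤ := top_unique h3
      rw [hmem] at h4
      exact ENNReal.top_ne_zero h4.symm
    have hT2 : ∀ δ θ θ' : ℝ, 0 < θ → θ ≤ θ' →
        {α : ℝ | mUpperBall f Z α (⇑φ) δ θ' = 0} ⊆ {α : ℝ | mUpperBall f Z α (⇑φ) δ θ = 0} := by
      intro δ θ θ' h0 hθθ' α hα
      have h1 : mUpperBall f Z α (⇑φ) δ θ ≤ mUpperBall f Z α (⇑φ) δ θ' :=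
        limsup_le_limsup (Eventually.of_forall fun N => MBall_mono_theta f Z α (⇑φ) δ N h0 hθθ')
      rw [Set.mem_setOf_eq] at hα ⊢
      rw [hα] at h1
      exact le_zero_iff.1 h1
    have hT3 : ∀ δ θ θ' α α' : ℝ, 0 < δ → θ ∈ Ioc (0:ℝ) 1 → θ' ∈ Ioc (0:ℝ) 1 → θ ≤ θ' →
        α ∈ {α : ℝ | mUpperBall f Z α (⇑φ) δ θ = 0} →
        (θ'/θ)*(α+‖φ‖) - ‖φ‖ + w δ ≤ α' →
        α' ∈ {α : ℝ | mUpperBall f Z α (⇑φ) δ θ' = 0} := by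
      intro δ θ θ' α α' hδ hθ hθ' hθθ' hmem hα'
      have hα : -‖φ‖ ≤ α := hT1 δ θ α hmem
      have hK : ∀ N, MBall f Z α' (⇑φ) δ N θ' ≤
          ENNReal.ofReal (Real.exp (α + ‖φ‖)) * MBall f Z α (⇑φ) δ N θ :=
        fun N => MBall_transfer f Z φ N hδ hθ hθ' hθθ' hα (hw0 δ hδ) (hwmem δ hδ.le) hα'
      have h1 : limsup (fun N => MBall f Z α' (⇑φ) δ N θ') atTop ≤
          limsup (fun N => ENNReal.ofReal (Real.exp (α + ‖φ‖)) * MBall f Z α (⇑φ) δ N θ) atTop :=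
        limsup_le_limsup (Eventually.of_forall hK)
      rw [ENNReal.limsup_const_mul_of_ne_top ENNReal.ofReal_ne_top] at h1
      rw [Set.mem_setOf_eq] at hmem ⊢
      rw [show limsup (fun N => MBall f Z α (⇑φ) δ N θ) atTop = mUpperBall f Z α (⇑φ) δ θ
        from rfl, hmem, mul_zero] at h1
      exact le_zero_iff.1 h1
    have := generic_cont ‖φ‖ (norm_nonneg φ) w
      (fun δ θ => {α : ℝ | mUpperBall f Z α (⇑φ) δ θ = 0}) hw0 hw2C hwsmall hT1 hT2 hT3
    exact this
end NDSPressure
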